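/- Let N ≥ 1, P ≥ 1 squarefree, and W_P(N) = {n : 1 ≤ n ≤ P, gcd((N−n)(N+n), P) = 1}. For each prime p ∣ P with p ∤ 2N, let \overline{P_p} denote an inverse of P/p modulo p. Define α_p(P, kN) = p − 2 if p ∣ k, and α_p(P,kN) = −2·cos(2kN·\overline{P_p}·π/p) if p ∤ k. Then for every integer k ≥ 1: ∑_{n ∈ W_P(N)} cos(2nkπ/P) = μ(gcd(N,P)) · ∏_{p ∣ gcd(k, gcd(N,P))} (1−p) · ∏_{p ∣ P, p ∤ 2N} α_p(P, kN). -/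

import Mathlib

noncomputable def Ee (q : ℕ) (m : ℤ) : ℂ := Complex.exp (2 * Real.pi * Complex.I * m / q)

lemma Ee_add (q : ℕ) (m n : ℤ) : Ee q (m + n) = Ee q m * Ee q n := by
  rw [Ee, Ee, Ee, ← Complex.exp_add]
  congr 1
  push_cast
  ring

lemma Ee_pow (q : ℕ) (c : ℤ) (x : ℕ) : Ee q (c * x) = (Ee q c) ^ x := by
  rw [Ee, Ee, ← Complex.exp_nat_mul]
  congr 1
  push_cast
  ring

lemma Ee_dvd (q : ℕ) (hq : q ≠ 0) (m : ℤ) (h : (q : ℤ) ∣ m) : Ee q m = 1 := by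
  obtain ⟨t, rfl⟩ := h
  rw [Ee]
  have hq' : (q : ℂ) ≠ 0 := by exact_mod_cast hq
  have : (2 : ℂ) * Real.pi * Complex.I * ((q : ℤ) * t : ℤ) / (q : ℕ) = t * (2 * Real.pi * Complex.I) := by
    push_cast
    field_simp
  rw [this]
  simpa using Complex.exp_int_mul_two_pi_mul_I t

lemma Ee_congr (q : ℕ) (hq : q ≠ 0) (m m' : ℤ) (h : (q : ℤ) ∣ m - m') : Ee q m = Ee q m' := by
  have h2 : Ee q (m' + (m - m')) = Ee q m' * Ee q (m - m') := Ee_add q m' (m - m')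
  rw [Ee_dvd q hq _ h, mul_one] at h2
  simpa using h2

lemma Ee_eq_one_iff (q : ℕ) (hq : q ≠ 0) (c : ℤ) : Ee q c = 1 ↔ (q : ℤ) ∣ c := by
  constructor
  · intro h
    rw [Ee, Complex.exp_eq_one_iff] at h
    obtain ⟨n, hn⟩ := h
    have hq' : (q : ℂ) ≠ 0 := by exact_mod_cast hq
    have h2 : (2 : ℂ) * Real.pi * Complex.I ≠ 0 := by
      simp [Real.pi_ne_zero, Complex.I_ne_zero, Complex.ofReal_ne_zero]
    have hc : (c : ℂ) = q * n := by
      field_simp at hn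
      have h3 : (c : ℂ) * (2 * Real.pi * Complex.I) = (q : ℂ) * n * (2 * Real.pi * Complex.I) := by
        rw [mul_comm ((c:ℂ)) _, hn]; ring
      exact mul_right_cancel₀ h2 h3
    exact ⟨n, by exact_mod_cast hc⟩
  · exact Ee_dvd q hq c

noncomputable def Ssum (N q : ℕ) (c : ℤ) : ℂ :=
  ∑ x ∈ Finset.range q,
    if Int.gcd (((N : ℤ) - (x : ℤ)) * ((N : ℤ) + (x : ℤ))) (q : ℤ) = 1 then Ee q (c * x) else 0

lemma int_gcd_eq_one_iff_isUnit (q : ℕ) [NeZero q] (a : ℤ) :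
    Int.gcd a q = 1 ↔ IsUnit ((a : ZMod q)) := by
  rw [← Int.isCoprime_iff_gcd_eq_one]
  constructor
  · rintro ⟨u, v, huv⟩
    have h1 : (u : ZMod q) * (a : ZMod q) = 1 := by
      have h2 := congrArg (fun x : ℤ => (x : ZMod q)) huv
      push_cast at h2
      simpa using h2
    exact IsUnit.of_mul_eq_one _ ((mul_comm (a : ZMod q) (u : ZMod q)) ▸ h1)
  · intro h
    obtain ⟨u, hu⟩ := h
    set b : ℤ := (((u⁻¹ : (ZMod q)ˣ) : ZMod q).val : ℤ) with hb
    have hb1 : ((b : ℤ) : ZMod q) = ((u⁻¹ : (ZMod q)ˣ) : ZMod q) := by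
      rw [hb]; push_cast [ZMod.natCast_val]; simp [ZMod.natCast_rightInverse _]
    have h0 : ((a * b - 1 : ℤ) : ZMod q) = 0 := by
      push_cast
      rw [hb1, ← hu]
      simp
    rw [ZMod.intCast_zmod_eq_zero_iff_dvd] at h0
    obtain ⟨t, ht⟩ := h0
    exact ⟨b, -t, by linarith⟩

lemma zmod_sum_val (q : ℕ) [NeZero q] (f : ℕ → ℂ) :
    ∑ x : ZMod q, f x.val = ∑ i ∈ Finset.range q, f i := by
  apply Finset.sum_nbij' (i := fun (x : ZMod q) => x.val) (j := fun (i : ℕ) => (i : ZMod q))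
  · intro a _; exact Finset.mem_range.2 (ZMod.val_lt a)
  · intro a _; exact Finset.mem_univ _
  · intro a _; exact ZMod.natCast_rightInverse a
  · intro a ha; exact ZMod.val_cast_of_lt (Finset.mem_range.1 ha)
  · intro a _; rfl

lemma Ssum_eq_zmod (N q : ℕ) [NeZero q] (c : ℤ) :
    Ssum N q c = ∑ x : ZMod q,
      if IsUnit (((N : ZMod q) - x) * ((N : ZMod q) + x)) then Ee q (c * x.val) else 0 := by
  rw [Ssum, ← zmod_sum_val q
    (fun i => if Int.gcd (((N : ℤ) - (i : ℤ)) * ((N : ℤ) + (i : ℤ))) (q : ℤ) = 1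
              then Ee q (c * i) else 0)]
  apply Finset.sum_congr rfl
  intro x _
  have hcond : Int.gcd (((N : ℤ) - (x.val : ℤ)) * ((N : ℤ) + (x.val : ℤ))) (q : ℤ) = 1
      ↔ IsUnit (((N : ZMod q) - x) * ((N : ZMod q) + x)) := by
    rw [int_gcd_eq_one_iff_isUnit]
    push_cast [ZMod.natCast_val]
    simp [ZMod.natCast_rightInverse _]
  by_cases h : IsUnit (((N : ZMod q) - x) * ((N : ZMod q) + x))
  · rw [if_pos (hcond.2 h), if_pos h]
  · rw [if_neg (fun hh => h (hcond.1 hh)), if_neg h]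

lemma sum_Ee (q : ℕ) [NeZero q] (c : ℤ) :
    ∑ x : ZMod q, Ee q (c * x.val) = if (q : ℤ) ∣ c then (q : ℂ) else 0 := by
  have hq : q ≠ 0 := NeZero.ne q
  have h1 : ∀ x : ZMod q, Ee q (c * x.val) = (Ee q c) ^ x.val := fun x => Ee_pow q c x.val
  simp_rw [h1]
  rw [zmod_sum_val q (fun i => (Ee q c) ^ i)]
  by_cases hd : (q : ℤ) ∣ c
  · simp [Ee_dvd q hq c hd, if_pos hd]
  · rw [if_neg hd]
    have hr : Ee q c ≠ 1 := fun h => hd ((Ee_eq_one_iff q hq c).1 h)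
    rw [geom_sum_eq hr]
    have h2 : (Ee q c) ^ q = 1 := by
      rw [← Ee_pow, Ee_dvd q hq]
      exact ⟨c, mul_comm _ _⟩
    rw [h2]
    simp

lemma Ee_val_congr (q : ℕ) [NeZero q] (c a : ℤ) (x : ZMod q) (h : ((a : ℤ) : ZMod q) = x) :
    Ee q (c * x.val) = Ee q (c * a) := by
  apply Ee_congr q (NeZero.ne q)
  have hd : (q : ℤ) ∣ (x.val : ℤ) - a := by
    rw [← ZMod.intCast_zmod_eq_zero_iff_dvd]
    push_cast [ZMod.natCast_val]
    rw [h]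
    simp [ZMod.natCast_rightInverse _]
  obtain ⟨t, ht⟩ := hd
  exact ⟨c * t, by rw [← mul_sub, ht]; ring⟩

lemma Ee_two_cos (q : ℕ) (m : ℤ) :
    Ee q m + Ee q (-m) = ((2 * Real.cos (2 * Real.pi * m / q) : ℝ) : ℂ) := by
  have h1 : Ee q m = Complex.exp (((2 * Real.pi * m / q : ℝ) : ℂ) * Complex.I) := by
    rw [Ee]; congr 1; push_cast; ring
  have h2 : Ee q (-m) = Complex.exp (-(((2 * Real.pi * m / q : ℝ) : ℂ)) * Complex.I) := by
    rw [Ee]; congr 1; push_cast; ring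
  rw [h1, h2]
  set θ : ℝ := 2 * Real.pi * m / q
  have h3 : Complex.exp ((θ:ℂ) * Complex.I) + Complex.exp (-(θ:ℂ) * Complex.I)
      = 2 * Complex.cos (θ : ℂ) := by
    rw [Complex.cos]
    ring
  rw [h3, ← Complex.ofReal_cos]
  push_cast
  ring

lemma Ssum_prime (N p : ℕ) (hp : p.Prime) (c : ℤ) :
    Ssum N p c = (if (p : ℤ) ∣ c then (p : ℂ) else 0)
      - ∑ x ∈ ({(N : ZMod p), -(N : ZMod p)} : Finset (ZMod p)), Ee p (c * x.val) := by
  haveI : Fact p.Prime := ⟨hp⟩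
  rw [Ssum_eq_zmod]
  have hcond : ∀ x : ZMod p,
      IsUnit (((N : ZMod p) - x) * ((N : ZMod p) + x))
        ↔ x ∉ ({(N : ZMod p), -(N : ZMod p)} : Finset (ZMod p)) := by
    intro x
    rw [isUnit_iff_ne_zero, mul_ne_zero_iff, sub_ne_zero]
    simp only [Finset.mem_insert, Finset.mem_singleton, not_or]
    constructor
    · rintro ⟨h1, h2⟩
      exact ⟨fun h => h1 h.symm, fun h => h2 (by rw [h]; ring)⟩
    · rintro ⟨h1, h2⟩
      exact ⟨fun h => h1 h.symm, fun h => h2 (eq_neg_of_add_eq_zero_right h)⟩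
  have hterm : ∀ x : ZMod p,
      (if IsUnit (((N : ZMod p) - x) * ((N : ZMod p) + x)) then Ee p (c * x.val) else 0)
      = if x ∉ ({(N : ZMod p), -(N : ZMod p)} : Finset (ZMod p)) then Ee p (c * x.val) else 0 :=
    fun x => if_congr (hcond x) rfl rfl
  rw [Finset.sum_congr rfl (fun x _ => hterm x), ← Finset.sum_filter, Finset.filter_not, Finset.filter_mem_eq_inter, Finset.univ_inter,
    Finset.sum_sdiff_eq_sub (Finset.subset_univ _), sum_Ee]

lemma Ssum_prime_dvd (N p : ℕ) (hp : p.Prime) (hpN : p ∣ N) (c : ℤ) :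
    Ssum N p c = (((if (p : ℤ) ∣ c then (p : ℝ) - 1 else -1) : ℝ) : ℂ) := by
  haveI : Fact p.Prime := ⟨hp⟩
  rw [Ssum_prime N p hp c]
  have hN0 : (N : ZMod p) = 0 := (ZMod.natCast_eq_zero_iff _ _).2 hpN
  rw [hN0]
  simp only [neg_zero, Finset.insert_eq_self, Finset.mem_singleton, Finset.pair_eq_singleton,
    Finset.sum_singleton]
  rw [ZMod.val_zero]
  have h0 : Ee p (c * (0 : ℕ)) = 1 := by
    rw [Nat.cast_zero, mul_zero]
    exact Ee_dvd p hp.ne_zero 0 (dvd_zero _)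
  rw [h0]
  split_ifs <;> push_cast <;> ring

lemma Ssum_prime_two (N : ℕ) (hN : ¬ 2 ∣ N) (c : ℤ) : Ssum N 2 c = 1 := by
  rw [Ssum_prime N 2 Nat.prime_two c]
  have hN1 : (N : ZMod 2) = 1 := by
    have hm : N % 2 = 1 := by omega
    rw [← ZMod.natCast_mod, hm, Nat.cast_one]
  have hneg : (-(1 : ZMod 2)) = 1 := by decide
  rw [hN1, hneg]
  simp only [Finset.insert_eq_self, Finset.mem_singleton, Finset.pair_eq_singleton,
    Finset.sum_singleton]
  have hval : (1 : ZMod 2).val = 1 := rfl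
  rw [hval]
  have hcast : ((2 : ℕ) : ℤ) = (2 : ℤ) := by norm_num
  rw [hcast]
  by_cases hc : (2 : ℤ) ∣ c
  · rw [if_pos hc]
    have : Ee 2 (c * (1 : ℕ)) = 1 := by
      rw [Nat.cast_one, mul_one]
      exact Ee_dvd 2 two_ne_zero c hc
    rw [this]
    norm_num
  · rw [if_neg hc]
    have h1 : Ee 2 (c * (1 : ℕ)) = Ee 2 1 := by
      apply Ee_congr 2 two_ne_zero
      rw [Nat.cast_one, mul_one]
      omega
    have h2 : Ee 2 1 = -1 := by
      rw [Ee]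
      have : (2 : ℂ) * Real.pi * Complex.I * ((1 : ℤ) : ℂ) / ((2 : ℕ) : ℂ)
          = (Real.pi : ℂ) * Complex.I := by push_cast; ring
      rw [this, Complex.exp_pi_mul_I]
    rw [h1, h2]
    norm_num

lemma Ssum_prime_odd (N p : ℕ) (hp : p.Prime) (hp2 : p ≠ 2) (hpN : ¬ p ∣ N) (c : ℤ) :
    Ssum N p c = ((((if (p : ℤ) ∣ c then (p : ℝ) else 0)
      - 2 * Real.cos (2 * Real.pi * (c * N) / p)) : ℝ) : ℂ) := by
  haveI : Fact p.Prime := ⟨hp⟩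
  rw [Ssum_prime N p hp c]
  have hN0 : (N : ZMod p) ≠ 0 := fun h => hpN ((ZMod.natCast_eq_zero_iff _ _).1 h)
  have h20 : (2 : ZMod p) ≠ 0 := by
    have : ((2 : ℕ) : ZMod p) ≠ 0 := fun h => hp2 (((Nat.prime_dvd_prime_iff_eq hp Nat.prime_two).1
      ((ZMod.natCast_eq_zero_iff _ _).1 h)))
    simpa using this
  have hne : (N : ZMod p) ≠ -(N : ZMod p) := by
    intro h
    have h2 : (2 : ZMod p) * (N : ZMod p) = 0 := by linear_combination h
    rcases mul_eq_zero.1 h2 with h | h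
    · exact h20 h
    · exact hN0 h
  rw [Finset.sum_pair hne]
  rw [Ee_val_congr p c (N : ℤ) _ (by push_cast; ring),
    Ee_val_congr p c (-(N : ℤ)) _ (by push_cast; ring)]
  have hneg : c * (-(N : ℤ)) = -(c * N) := by ring
  rw [hneg, Ee_two_cos p (c * N)]
  split_ifs <;> push_cast <;> ring

lemma prod_isUnit_iff {A B : Type*} [CommMonoid A] [CommMonoid B] (z : A × B) :
    IsUnit z ↔ IsUnit z.1 ∧ IsUnit z.2 := by
  constructor
  · intro h
    exact ⟨h.map (MonoidHom.fst A B), h.map (MonoidHom.snd A B)⟩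
  · rintro ⟨⟨u1, hu1⟩, ⟨u2, hu2⟩⟩
    refine isUnit_iff_exists_inv.2 ⟨((u1⁻¹ : Aˣ), (u2⁻¹ : Bˣ)), ?_⟩
    ext
    · simp [← hu1]
    · simp [← hu2]

lemma Ee_mul_right (a b : ℕ) (ha : a ≠ 0) (hb : b ≠ 0) (m : ℤ) :
    Ee (a * b) (m * b) = Ee a m := by
  rw [Ee, Ee]
  congr 1
  have ha' : (a : ℂ) ≠ 0 := by exact_mod_cast ha
  have hb' : (b : ℂ) ≠ 0 := by exact_mod_cast hb
  push_cast
  field_simp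

lemma Ee_mul_left (a b : ℕ) (ha : a ≠ 0) (hb : b ≠ 0) (m : ℤ) :
    Ee (a * b) (m * a) = Ee b m := by
  rw [mul_comm a b]
  exact Ee_mul_right b a hb ha m

lemma Ssum_mul (N a b : ℕ) (ha : a ≠ 0) (hb : b ≠ 0) (hab : a.Coprime b)
    (u v c : ℤ) (huv : u * b + v * a = 1) :
    Ssum N (a * b) c = Ssum N a (c * u) * Ssum N b (c * v) := by
  haveI : NeZero a := ⟨ha⟩
  haveI : NeZero b := ⟨hb⟩
  haveI : NeZero (a * b) := ⟨mul_ne_zero ha hb⟩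
  rw [Ssum_eq_zmod, Ssum_eq_zmod, Ssum_eq_zmod]
  set e := ZMod.chineseRemainder hab with he
  have hmap : ∀ x : ZMod (a * b), e x = (((x.val : ℕ) : ZMod a), ((x.val : ℕ) : ZMod b)) := by
    intro x
    conv_lhs => rw [← ZMod.natCast_rightInverse x, map_natCast]
    ext
    · exact congrArg Prod.fst (rfl : ((x.val : ℕ) : ZMod a × ZMod b) = _) |>.trans rfl
    · rfl
  have key : ∀ y : ZMod a × ZMod b,
      (if IsUnit (((N : ZMod (a * b)) - e.symm y) * ((N : ZMod (a * b)) + e.symm y))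
        then Ee (a * b) (c * (e.symm y).val) else 0)
      = (if IsUnit (((N : ZMod a) - y.1) * ((N : ZMod a) + y.1))
          then Ee a ((c * u) * y.1.val) else 0)
        * (if IsUnit (((N : ZMod b) - y.2) * ((N : ZMod b) + y.2))
          then Ee b ((c * v) * y.2.val) else 0) := by
    intro y
    set x := e.symm y with hxdef
    have hy : e x = y := e.apply_symm_apply y
    have hy1 : ((x.val : ℕ) : ZMod a) = y.1 := by rw [← hy, hmap x]
    have hy2 : ((x.val : ℕ) : ZMod b) = y.2 := by rw [← hy, hmap x]
    have hcond : IsUnit (((N : ZMod (a * b)) - x) * ((N : ZMod (a * b)) + x))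
        ↔ IsUnit (((N : ZMod a) - y.1) * ((N : ZMod a) + y.1))
          ∧ IsUnit (((N : ZMod b) - y.2) * ((N : ZMod b) + y.2)) := by
      have himg : e (((N : ZMod (a * b)) - x) * ((N : ZMod (a * b)) + x))
          = ((((N : ZMod a) - y.1) * ((N : ZMod a) + y.1)),
             (((N : ZMod b) - y.2) * ((N : ZMod b) + y.2))) := by
        rw [map_mul, map_sub, map_add, map_natCast, hy]
        ext <;> simp
      constructor
      · intro h
        have h2 := h.map e
        rw [himg, prod_isUnit_iff] at h2
        exact h2
      · rintro h
        have h2 : IsUnit (e (((N : ZMod (a * b)) - x) * ((N : ZMod (a * b)) + x))) := by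
          rw [himg, prod_isUnit_iff]
          exact h
        have h3 := h2.map e.symm
        rwa [RingEquiv.symm_apply_apply] at h3
    have hee : Ee (a * b) (c * x.val) = Ee a ((c * u) * y.1.val) * Ee b ((c * v) * y.2.val) := by
      have h1 : c * (x.val : ℤ) = (c * u * x.val) * b + (c * v * x.val) * a := by
        linear_combination (c * (x.val : ℤ)) * huv.symm
      rw [h1, Ee_add, Ee_mul_right a b ha hb, Ee_mul_left a b ha hb]
      congr 1
      · exact (Ee_val_congr a (c * u) (x.val : ℤ) y.1 (by push_cast; rw [hy1])).symm
      · exact (Ee_val_congr b (c * v) (x.val : ℤ) y.2 (by push_cast; rw [hy2])).symm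
    by_cases h : IsUnit (((N : ZMod (a * b)) - x) * ((N : ZMod (a * b)) + x))
    · obtain ⟨h1, h2⟩ := hcond.1 h
      rw [if_pos h, if_pos h1, if_pos h2, hee]
    · rw [if_neg h]
      rcases not_and_or.1 (fun hh => h (hcond.2 hh)) with h1 | h1
      · rw [if_neg h1, zero_mul]
      · rw [if_neg h1, mul_zero]
  calc ∑ x : ZMod (a * b), (if IsUnit (((N : ZMod (a * b)) - x) * ((N : ZMod (a * b)) + x))
        then Ee (a * b) (c * x.val) else 0)
      = ∑ y : ZMod a × ZMod b,
          (if IsUnit (((N : ZMod (a * b)) - e.symm y) * ((N : ZMod (a * b)) + e.symm y))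
            then Ee (a * b) (c * (e.symm y).val) else 0) :=
        (Equiv.sum_comp e.toEquiv.symm _).symm
    _ = ∑ y : ZMod a × ZMod b,
          (if IsUnit (((N : ZMod a) - y.1) * ((N : ZMod a) + y.1))
            then Ee a ((c * u) * y.1.val) else 0)
          * (if IsUnit (((N : ZMod b) - y.2) * ((N : ZMod b) + y.2))
            then Ee b ((c * v) * y.2.val) else 0) := Finset.sum_congr rfl (fun y _ => key y)
    _ = _ := by
      rw [Fintype.sum_prod_type, Finset.sum_mul_sum]

lemma Ssum_congr (N q : ℕ) (hq : q ≠ 0) (c c' : ℤ) (h : (q : ℤ) ∣ c - c') :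
    Ssum N q c = Ssum N q c' := by
  rw [Ssum, Ssum]
  apply Finset.sum_congr rfl
  intro x _
  have : Ee q (c * x) = Ee q (c' * x) := by
    apply Ee_congr q hq
    obtain ⟨t, ht⟩ := h
    exact ⟨t * x, by rw [← sub_mul, ht]; ring⟩
  rw [this]

lemma Ssum_one (N : ℕ) (c : ℤ) : Ssum N 1 c = 1 := by
  rw [Ssum]
  rw [Finset.range_one, Finset.sum_singleton]
  rw [if_pos (by simp)]
  rw [Ee, Nat.cast_one, div_one]
  push_cast
  rw [mul_zero, mul_zero, Complex.exp_zero]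

lemma Ssum_factor (N : ℕ) : ∀ (q : ℕ), q ≠ 0 → Squarefree q → ∀ (c : ℤ) (w : ℕ → ℤ),
    (∀ p ∈ q.primeFactors, (p : ℤ) ∣ w p * ((q / p : ℕ) : ℤ) - 1) →
    Ssum N q c = ∏ p ∈ q.primeFactors, Ssum N p (c * w p) := by
  intro q
  induction q using Nat.strong_induction_on with
  | _ q ih =>
    intro hq hsq c w hw
    rcases eq_or_ne q 1 with rfl | hq1
    · simp [Nat.primeFactors_one, Ssum_one]
    · set p := q.minFac with hpdef
      have hp : p.Prime := Nat.minFac_prime hq1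
      have hpq : p ∣ q := Nat.minFac_dvd q
      set b := q / p with hbdef
      have hqb : q = p * b := (Nat.mul_div_cancel' hpq).symm
      have hb0 : b ≠ 0 := by
        intro h
        rw [h, mul_zero] at hqb
        exact hq hqb
      have hpb : ¬ p ∣ b := by
        intro h
        have : p * p ∣ q := by
          rw [hqb]
          exact mul_dvd_mul_left p h
        exact hp.not_isUnit (hsq p this)
      have hcop : Nat.Coprime p b := (Nat.Prime.coprime_iff_not_dvd hp).2 hpb
      set u : ℤ := Int.gcdB p b with hudef
      set v : ℤ := Int.gcdA p b with hvdef
      have hbez : u * b + v * p = 1 := by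
        have h1 := Int.gcd_eq_gcd_ab (p : ℤ) (b : ℤ)
        have h2 : Int.gcd (p : ℤ) (b : ℤ) = 1 := by
          rwa [Int.gcd_natCast_natCast]
        rw [h2] at h1
        push_cast at h1
        linarith [h1]
      have hblt : b < q := by
        rw [hbdef]
        exact Nat.div_lt_self (Nat.pos_of_ne_zero hq) hp.one_lt
      have hbsq : Squarefree b := hsq.squarefree_of_dvd ⟨p, by rw [hqb]; ring⟩
      have hbfac : b.primeFactors ⊆ q.primeFactors :=
        Nat.primeFactors_mono ⟨p, by rw [hqb]; ring⟩ hq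
      have hw' : ∀ p' ∈ b.primeFactors, (p' : ℤ) ∣ (p * w p') * ((b / p' : ℕ) : ℤ) - 1 := by
        intro p' hp'
        have hp'q := hbfac hp'
        have h1 := hw p' hp'q
        have hp'b : p' ∣ b := Nat.dvd_of_mem_primeFactors hp'
        have hqp' : q / p' = p * (b / p') := by
          rw [hqb, Nat.mul_div_assoc p hp'b]
        rw [hqp'] at h1
        push_cast at h1 ⊢
        convert h1 using 2
        ring
      have hstep : Ssum N q c = Ssum N p (c * u) * Ssum N b (c * v) := by
        rw [hqb]
        exact Ssum_mul N p b hp.ne_zero hb0 hcop u v c hbez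
      rw [hstep, ih b hblt hb0 hbsq (c * v) (fun p' => p * w p') hw']
      have hprod : ∀ p' ∈ b.primeFactors,
          Ssum N p' ((c * v) * (p * w p')) = Ssum N p' (c * w p') := by
        intro p' hp'
        have hp'b : (p' : ℤ) ∣ (b : ℤ) := Int.natCast_dvd_natCast.2 (Nat.dvd_of_mem_primeFactors hp')
        have hne : p' ≠ 0 := (Nat.prime_of_mem_primeFactors hp').ne_zero
        apply Ssum_congr N p' hne
        have heq : (c * v) * (p * w p') - c * w p' = -(c * w p' * u) * b := by
          linear_combination (c * w p') * hbez
        rw [heq]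
        exact Dvd.dvd.mul_left hp'b _
      rw [Finset.prod_congr rfl hprod]
      have hpnotb : p ∉ b.primeFactors := fun h => hpb (Nat.dvd_of_mem_primeFactors h)
      have hfac : q.primeFactors = insert p b.primeFactors := by
        rw [hqb, Nat.primeFactors_mul hp.ne_zero hb0, Nat.Prime.primeFactors hp]
        exact Finset.insert_eq p b.primeFactors ▸ rfl
      rw [hfac, Finset.prod_insert hpnotb]
      congr 1
      apply Ssum_congr N p hp.ne_zero
      have h1 := hw p (by rw [hfac]; exact Finset.mem_insert_self _ _)
      have h2 : (p : ℤ) ∣ u * b - 1 := ⟨-v, by linear_combination hbez⟩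
      obtain ⟨t1, ht1⟩ := h1
      obtain ⟨t2, ht2⟩ := h2
      exact ⟨c * (w p * t2 - u * t1), by linear_combination c * (w p) * ht2 - c * u * ht1⟩

lemma Ee_re (q : ℕ) (m : ℤ) : (Ee q m).re = Real.cos (2 * Real.pi * m / q) := by
  have h1 : Ee q m = Complex.exp (((2 * Real.pi * m / q : ℝ) : ℂ) * Complex.I) := by
    rw [Ee]; congr 1; push_cast; ring
  rw [h1, Complex.exp_ofReal_mul_I_re]

noncomputable def rloc (N k : ℕ) (inv : ℕ → ℕ) (p : ℕ) : ℝ :=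
  if p ∣ N then (if p ∣ k then (p : ℝ) - 1 else -1)
  else if p ∣ 2 * N then 1
  else (if p ∣ k then (p : ℝ) - 2
        else -2 * Real.cos (2 * k * N * inv p * Real.pi / p))

lemma local_value (N k P : ℕ) (inv : ℕ → ℕ) (p : ℕ) (hp : p.Prime)
    (w : ℤ) (hw : (p : ℤ) ∣ w * ((P / p : ℕ) : ℤ) - 1)
    (hwinv : ¬ p ∣ 2 * N → w = (inv p : ℤ)) :
    Ssum N p ((k : ℤ) * w) = ((rloc N k inv p : ℝ) : ℂ) := by
  have hpZ : Prime (p : ℤ) := Nat.prime_iff_prime_int.mp hp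
  have hpw : ¬ (p : ℤ) ∣ w := by
    intro h
    have h1 : (p : ℤ) ∣ 1 := by
      have h2 := dvd_sub (h.mul_right ((P / p : ℕ) : ℤ)) hw
      simpa using h2
    have h3 : (p : ℤ) = 1 := Int.eq_one_of_dvd_one (by positivity) h1
    have : p = 1 := by exact_mod_cast h3
    exact hp.one_lt.ne' this
  have hkdvd : (p : ℤ) ∣ (k : ℤ) * w ↔ p ∣ k := by
    constructor
    · intro h
      rcases hpZ.dvd_mul.1 h with h | h
      · exact_mod_cast h
      · exact absurd h hpw
    · intro h
      exact dvd_mul_of_dvd_left (Int.natCast_dvd_natCast.2 h) _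
  by_cases hpN : p ∣ N
  · rw [Ssum_prime_dvd N p hp hpN, Complex.ofReal_inj, rloc, if_pos hpN]
    by_cases hk' : p ∣ k
    · rw [if_pos (hkdvd.2 hk'), if_pos hk']
    · rw [if_neg (fun h => hk' (hkdvd.1 h)), if_neg hk']
  · by_cases h2N : p ∣ 2 * N
    · have hp2 : p = 2 := by
        rcases (Nat.Prime.dvd_mul hp).1 h2N with h | h
        · exact (Nat.prime_dvd_prime_iff_eq hp Nat.prime_two).1 h
        · exact absurd h hpN
      subst hp2
      rw [Ssum_prime_two N hpN _, rloc, if_neg hpN, if_pos h2N]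
      norm_num
    · have hp2 : p ≠ 2 := fun h => h2N (h ▸ Dvd.dvd.mul_right (dvd_refl p) N)
      rw [Ssum_prime_odd N p hp hp2 hpN, Complex.ofReal_inj, rloc, if_neg hpN, if_neg h2N]
      rw [hwinv h2N]
      by_cases hk' : p ∣ k
      · rw [if_pos (by rw [hwinv h2N] at hkdvd; exact hkdvd.2 hk'), if_pos hk']
        have hdvd : (p : ℤ) ∣ (k : ℤ) * (inv p : ℤ) * N := by
          apply dvd_mul_of_dvd_left
          exact dvd_mul_of_dvd_left (Int.natCast_dvd_natCast.2 hk') _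
        obtain ⟨t, ht⟩ := hdvd
        have hp0 : (p : ℝ) ≠ 0 := by exact_mod_cast hp.ne_zero
        have htR : (k : ℝ) * (inv p : ℝ) * (N : ℝ) = (p : ℝ) * t := by exact_mod_cast ht
        push_cast
        have harg : 2 * Real.pi * ((k : ℝ) * (inv p : ℝ) * (N : ℝ)) / (p : ℝ)
            = (t : ℝ) * (2 * Real.pi) := by
          rw [htR]; field_simp
        rw [harg, Real.cos_int_mul_two_pi]
        ring
      · rw [if_neg (by rw [hwinv h2N] at hkdvd; exact fun h => hk' (hkdvd.1 h)), if_neg hk']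
        push_cast
        have harg : 2 * Real.pi * ((k : ℝ) * (inv p : ℝ) * (N : ℝ)) / (p : ℝ)
            = 2 * (k : ℝ) * (N : ℝ) * (inv p : ℝ) * Real.pi / (p : ℝ) := by ring
        rw [harg]
        ring

open ArithmeticFunction ArithmeticFunction.Moebius in
lemma rhs_combine (N k P : ℕ) (inv : ℕ → ℕ) (hN : N ≠ 0) (hP : P ≠ 0) (hk : k ≠ 0)
    (hsq : Squarefree P) :
    ∏ p ∈ P.primeFactors, rloc N k inv p
    = (μ (Nat.gcd N P) : ℝ) *
      (∏ p ∈ (Nat.gcd k (Nat.gcd N P)).primeFactors, (1 - (p : ℝ))) *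
      ∏ p ∈ P.primeFactors.filter (fun p => ¬ p ∣ 2 * N),
        (if p ∣ k then (p : ℝ) - 2
         else -2 * Real.cos (2 * k * N * inv p * Real.pi / p)) := by
  have hg0 : Nat.gcd N P ≠ 0 := Nat.gcd_ne_zero_right hP
  have hgsq : Squarefree (Nat.gcd N P) := hsq.squarefree_of_dvd (Nat.gcd_dvd_right N P)
  have hT : (Nat.gcd N P).primeFactors = P.primeFactors.filter (fun p => p ∣ N) := by
    ext p
    simp only [Nat.mem_primeFactors, Finset.mem_filter, Nat.dvd_gcd_iff]
    constructor
    · rintro ⟨hp, ⟨h1, h2⟩, _⟩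
      exact ⟨⟨hp, h2, hP⟩, h1⟩
    · rintro ⟨⟨hp, h2, _⟩, h1⟩
      exact ⟨hp, ⟨h1, h2⟩, hg0⟩
  have hU : (Nat.gcd k (Nat.gcd N P)).primeFactors
      = ((Nat.gcd N P).primeFactors).filter (fun p => p ∣ k) := by
    ext p
    simp only [Nat.mem_primeFactors, Finset.mem_filter, Nat.dvd_gcd_iff]
    constructor
    · rintro ⟨hp, ⟨h1, h2⟩, _⟩
      exact ⟨⟨hp, h2, hg0⟩, h1⟩
    · rintro ⟨⟨hp, h2, _⟩, h1⟩
      exact ⟨hp, ⟨h1, h2⟩, Nat.gcd_ne_zero_left hk⟩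
  have hμ : ((μ (Nat.gcd N P) : ℤ) : ℝ) = ∏ _p ∈ (Nat.gcd N P).primeFactors, (-1 : ℝ) := by
    rw [moebius_apply_of_squarefree hgsq, Finset.prod_const]
    have hcard : cardFactors (Nat.gcd N P) = (Nat.gcd N P).primeFactors.card := by
      have h1 := (cardDistinctFactors_eq_cardFactors_iff_squarefree hg0).2 hgsq
      rw [← h1, cardDistinctFactors_apply]
      exact (List.card_toFinset _).symm
    rw [hcard]
    push_cast
    ring
  have hsplit1 : ∏ p ∈ P.primeFactors.filter (fun p => p ∣ 2 * N), rloc N k inv p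
      = ∏ p ∈ (Nat.gcd N P).primeFactors, (if p ∣ k then (p : ℝ) - 1 else -1) := by
    rw [← Finset.prod_filter_mul_prod_filter_not
      (P.primeFactors.filter (fun p => p ∣ 2 * N)) (fun p => p ∣ N)]
    have h2 : ∏ p ∈ (P.primeFactors.filter (fun p => p ∣ 2 * N)).filter (fun p => ¬ p ∣ N),
        rloc N k inv p = 1 := by
      apply Finset.prod_eq_one
      intro p hp
      simp only [Finset.mem_filter] at hp
      rw [rloc, if_neg hp.2, if_pos hp.1.2]
    have h3 : (P.primeFactors.filter (fun p => p ∣ 2 * N)).filter (fun p => p ∣ N)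
        = P.primeFactors.filter (fun p => p ∣ N) := by
      rw [Finset.filter_filter]
      apply Finset.filter_congr
      intro p _
      constructor
      · rintro ⟨_, h⟩; exact h
      · intro h; exact ⟨h.mul_left 2, h⟩
    rw [h2, mul_one, h3, ← hT]
    apply Finset.prod_congr rfl
    intro p hp
    rw [hT] at hp
    simp only [Finset.mem_filter] at hp
    rw [rloc, if_pos hp.2]
  have hfin : ∏ p ∈ (Nat.gcd N P).primeFactors, (if p ∣ k then (p : ℝ) - 1 else -1)
      = ((μ (Nat.gcd N P) : ℤ) : ℝ)
        * ∏ p ∈ (Nat.gcd k (Nat.gcd N P)).primeFactors, (1 - (p : ℝ)) := by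
    rw [hμ, hU]
    rw [← Finset.prod_filter_mul_prod_filter_not ((Nat.gcd N P).primeFactors) (fun p => p ∣ k)
      (fun p => if p ∣ k then (p : ℝ) - 1 else -1)]
    rw [← Finset.prod_filter_mul_prod_filter_not ((Nat.gcd N P).primeFactors) (fun p => p ∣ k)
      (fun _ => (-1 : ℝ))]
    have ha : ∏ p ∈ (Nat.gcd N P).primeFactors.filter (fun p => p ∣ k),
        (if p ∣ k then (p : ℝ) - 1 else -1)
        = ∏ p ∈ (Nat.gcd N P).primeFactors.filter (fun p => p ∣ k), ((-1) * (1 - (p : ℝ))) := by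
      apply Finset.prod_congr rfl
      intro p hp
      rw [if_pos (Finset.mem_filter.1 hp).2]
      ring
    have hb : ∏ p ∈ (Nat.gcd N P).primeFactors.filter (fun p => ¬ p ∣ k),
        (if p ∣ k then (p : ℝ) - 1 else -1)
        = ∏ _p ∈ (Nat.gcd N P).primeFactors.filter (fun p => ¬ p ∣ k), (-1 : ℝ) := by
      apply Finset.prod_congr rfl
      intro p hp
      rw [if_neg (Finset.mem_filter.1 hp).2]
    rw [ha, hb, Finset.prod_mul_distrib]
    ring
  have hsplit2 : ∏ p ∈ P.primeFactors.filter (fun p => ¬ p ∣ 2 * N), rloc N k inv p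
      = ∏ p ∈ P.primeFactors.filter (fun p => ¬ p ∣ 2 * N),
          (if p ∣ k then (p : ℝ) - 2
           else -2 * Real.cos (2 * k * N * inv p * Real.pi / p)) := by
    apply Finset.prod_congr rfl
    intro p hp
    simp only [Finset.mem_filter] at hp
    have hpN : ¬ p ∣ N := fun h => hp.2 (h.mul_left 2)
    rw [rloc, if_neg hpN, if_neg hp.2]
  rw [← Finset.prod_filter_mul_prod_filter_not P.primeFactors (fun p => p ∣ 2 * N)
    (rloc N k inv), hsplit1, hfin, hsplit2]

open Real ArithmeticFunction ArithmeticFunction.Moebius in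
theorem stmt_12 (N P : ℕ) (hN : 1 ≤ N) (hP : 1 ≤ P) (hsq : Squarefree P)
    (inv : ℕ → ℕ)
    (hinv : ∀ p ∈ P.primeFactors, ¬ p ∣ 2 * N → (P / p) * inv p ≡ 1 [MOD p])
    (k : ℕ) (hk : 1 ≤ k) :
    ∑ n ∈ (Finset.Icc 1 P).filter
        (fun n : ℕ => Int.gcd (((N : ℤ) - (n : ℤ)) * ((N : ℤ) + (n : ℤ))) (P : ℤ) = 1),
      Real.cos (2 * n * k * π / P)
    = (μ (Nat.gcd N P) : ℝ) *
      (∏ p ∈ (Nat.gcd k (Nat.gcd N P)).primeFactors, (1 - (p : ℝ))) *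
      ∏ p ∈ P.primeFactors.filter (fun p => ¬ p ∣ 2 * N),
        (if p ∣ k then (p : ℝ) - 2
         else -2 * Real.cos (2 * k * N * inv p * π / p)) := by
  classical
  have hP0 : P ≠ 0 := by omega
  have hN0 : N ≠ 0 := by omega
  have hk0 : k ≠ 0 := by omega
  haveI : NeZero P := ⟨hP0⟩
  set w : ℕ → ℤ :=
    fun p => if p ∣ 2 * N then Int.gcdA ((P / p : ℕ) : ℤ) (p : ℤ) else (inv p : ℤ) with hwdef
  have hw : ∀ p ∈ P.primeFactors, (p : ℤ) ∣ w p * ((P / p : ℕ) : ℤ) - 1 := by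
    intro p hpmem
    have hp := Nat.prime_of_mem_primeFactors hpmem
    have hpP := Nat.dvd_of_mem_primeFactors hpmem
    by_cases h2N : p ∣ 2 * N
    · simp only [hwdef, if_pos h2N]
      have hnd : ¬ p ∣ P / p := by
        intro h
        have h1 : p * p ∣ P := by
          have h2 := Nat.mul_dvd_mul_left p h
          rwa [Nat.mul_div_cancel' hpP] at h2
        exact hp.not_isUnit (hsq p h1)
      have hcop : Int.gcd ((P / p : ℕ) : ℤ) (p : ℤ) = 1 := by
        rw [Int.gcd_natCast_natCast]
        exact Nat.coprime_comm.1 ((Nat.Prime.coprime_iff_not_dvd hp).2 hnd)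
      have hb := Int.gcd_eq_gcd_ab ((P / p : ℕ) : ℤ) (p : ℤ)
      rw [hcop] at hb
      refine ⟨- Int.gcdB ((P / p : ℕ) : ℤ) (p : ℤ), ?_⟩
      push_cast at hb ⊢
      linarith
    · simp only [hwdef, if_neg h2N]
      have h := Nat.ModEq.dvd (hinv p hpmem h2N)
      obtain ⟨t, ht⟩ := h
      refine ⟨-t, ?_⟩
      push_cast at ht ⊢
      linarith
  have hfact := Ssum_factor N P hP0 hsq (k : ℤ) w hw
  have hloc : ∀ p ∈ P.primeFactors, Ssum N p ((k : ℤ) * w p) = ((rloc N k inv p : ℝ) : ℂ) := by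
    intro p hp
    exact local_value N k P inv p (Nat.prime_of_mem_primeFactors hp) (w p) (hw p hp)
      (fun h => by simp only [hwdef, if_neg h])
  have hSsum : Ssum N P (k : ℤ) = ((∏ p ∈ P.primeFactors, rloc N k inv p : ℝ) : ℂ) := by
    rw [hfact, Finset.prod_congr rfl hloc, Complex.ofReal_prod]
  have hiff : (Int.gcd (((N : ℤ) - (P : ℤ)) * ((N : ℤ) + (P : ℤ))) (P : ℤ) = 1)
      ↔ (Int.gcd (((N : ℤ) - ((0 : ℕ) : ℤ)) * ((N : ℤ) + ((0 : ℕ) : ℤ))) (P : ℤ) = 1) := by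
    rw [int_gcd_eq_one_iff_isUnit, int_gcd_eq_one_iff_isUnit]
    have hc : ((((N : ℤ) - (P : ℤ)) * ((N : ℤ) + (P : ℤ)) : ℤ) : ZMod P)
        = ((((N : ℤ) - ((0 : ℕ) : ℤ)) * ((N : ℤ) + ((0 : ℕ) : ℤ)) : ℤ) : ZMod P) := by
      push_cast
      simp [ZMod.natCast_self]
    rw [hc]
  have hcosP : Real.cos (2 * (P : ℝ) * k * π / P) = 1 := by
    have hp0 : (P : ℝ) ≠ 0 := by exact_mod_cast hP0
    have harg : 2 * (P : ℝ) * k * π / P = (k : ℝ) * (2 * π) := by field_simp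
    rw [harg, Real.cos_nat_mul_two_pi]
  rw [Finset.sum_filter]
  have hIcc : ∑ n ∈ Finset.Icc 1 P,
      (if Int.gcd (((N : ℤ) - (n : ℤ)) * ((N : ℤ) + (n : ℤ))) (P : ℤ) = 1
        then Real.cos (2 * n * k * π / P) else 0)
      = ∑ n ∈ Finset.range P,
      (if Int.gcd (((N : ℤ) - (n : ℤ)) * ((N : ℤ) + (n : ℤ))) (P : ℤ) = 1
        then Real.cos (2 * n * k * π / P) else 0) := by
    rw [← Finset.Ico_add_one_right_eq_Icc, Finset.sum_Ico_succ_top (by omega), Finset.range_eq_Ico,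
      Finset.sum_eq_sum_Ico_succ_bot (by omega : 0 < P)]
    have hFP : (if Int.gcd (((N : ℤ) - (P : ℤ)) * ((N : ℤ) + (P : ℤ))) (P : ℤ) = 1
          then Real.cos (2 * (P : ℝ) * k * π / P) else 0)
        = (if Int.gcd (((N : ℤ) - ((0 : ℕ) : ℤ)) * ((N : ℤ) + ((0 : ℕ) : ℤ))) (P : ℤ) = 1
          then Real.cos (2 * ((0 : ℕ) : ℝ) * k * π / P) else 0) := by
      have hcos0 : Real.cos (2 * ((0 : ℕ) : ℝ) * k * π / P) = 1 := by norm_num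
      by_cases h : Int.gcd (((N : ℤ) - ((0 : ℕ) : ℤ)) * ((N : ℤ) + ((0 : ℕ) : ℤ))) (P : ℤ) = 1
      · rw [if_pos (hiff.2 h), if_pos h, hcosP, hcos0]
      · rw [if_neg (fun hh => h (hiff.1 hh)), if_neg h]
    rw [hFP]
    ring
  have hre : ∑ n ∈ Finset.range P,
      (if Int.gcd (((N : ℤ) - (n : ℤ)) * ((N : ℤ) + (n : ℤ))) (P : ℤ) = 1
        then Real.cos (2 * n * k * π / P) else 0) = (Ssum N P (k : ℤ)).re := by
    rw [Ssum, Complex.re_sum]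
    apply Finset.sum_congr rfl
    intro x _
    rw [apply_ite Complex.re, Complex.zero_re]
    by_cases h : Int.gcd (((N : ℤ) - (x : ℤ)) * ((N : ℤ) + (x : ℤ))) (P : ℤ) = 1
    · rw [if_pos h, if_pos h, Ee_re]
      congr 1
      push_cast
      ring
    · rw [if_neg h, if_neg h]
  rw [hIcc, hre, hSsum, Complex.ofReal_re]
  exact rhs_combine N k P inv hN0 hP0 hk0 hsq
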